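/- arXiv:1311.0551 — 4 statements merged into one kernel-verified Lean document; each statement's English description precedes it below -/
import Mathlib

section
/- For every b ∈ P one has G(P,q) · (Σ_{a ∈ P} q(a)⁻¹ · B(a,b)⁻¹) = |P| · q(b). Equivalently (Lemma 'formulaforqhat'), the element q̂ := (G(P,q)/|P|) · Σ_{a ∈ P} q(a)⁻¹ · a of the group algebra ℂ[P], under the Fourier transform that sends a ∈ P to the function φ ↦ φ(a)⁻¹ on characters of P, goes to the quadratic form transported to the character group via the isomorphism a ↦ B(·,a). -/
/-- Sum of a nontrivial multiplicative character over a finite abelian group is zero. -/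
lemma char_sum_zero {P : Type*} [AddCommGroup P] [Fintype P] (f : P → ℂˣ)
    (hf : ∀ a b : P, f (a + b) = f a * f b) (c₀ : P) (h : f c₀ ≠ 1) :
    ∑ c : P, (f c : ℂ) = 0 := by
  have reindex : ∑ c : P, (f (c + c₀) : ℂ) = ∑ c : P, (f c : ℂ) :=
    Fintype.sum_equiv (Equiv.addRight c₀) _ _ (fun c => rfl)
  have key : ∑ c : P, (f c : ℂ) = (f c₀ : ℂ) * ∑ c : P, (f c : ℂ) := by
    rw [Finset.mul_sum, ← reindex]
    exact Finset.sum_congr rfl (fun c _ => by rw [hf]; push_cast; ring)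
  have h1 : ((f c₀ : ℂ) - 1) * ∑ c : P, (f c : ℂ) = 0 := by
    rw [sub_mul, one_mul, ← key, sub_self]
  rcases mul_eq_zero.mp h1 with h2 | h2
  · exact absurd (Units.val_eq_one.mp (by linear_combination h2)) h
  · exact h2

/-- For a finite abelian group `P` with a nondegenerate quadratic form
`q : P → ℂˣ` (in the sense of metric groups), with associated bimultiplicative pairing
`B (a,b) = q(a+b) q(a)⁻¹ q(b)⁻¹` and Gauss sum `G(P,q) = Σ_a q(a)`, one has for every `b`:
`G(P,q) · (Σ_a q(a)⁻¹ B(a,b)⁻¹) = |P| · q(b)`. -/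
theorem gauss_sum_fourier_of_quadratic_form
    {P : Type*} [AddCommGroup P] [Fintype P]
    (q : P → ℂˣ) (B : P → P → ℂˣ)
    (hB : ∀ a b : P, B a b = q (a + b) * (q a)⁻¹ * (q b)⁻¹)
    (hq : ∀ (n : ℤ) (a : P), q (n • a) = q a ^ (n ^ 2))
    (hmul₁ : ∀ a a' b : P, B (a + a') b = B a b * B a' b)
    (hmul₂ : ∀ a b b' : P, B a (b + b') = B a b * B a b')
    (hnd : ∀ a : P, a ≠ 0 → ∃ b : P, B a b ≠ 1) :
    ∀ b : P,
      (∑ a : P, (q a : ℂ)) * (∑ a : P, (((q a)⁻¹ * (B a b)⁻¹ : ℂˣ) : ℂ))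
        = (Fintype.card P : ℂ) * (q b : ℂ) := by
  classical
  have hq0 : q 0 = 1 := by
    have := hq 0 0
    simpa using this
  have hqne : ∀ a : P, (q a : ℂ) ≠ 0 := fun a => Units.ne_zero _
  have hBc : ∀ a b : P, (B a b : ℂ) = (q (a + b) : ℂ) * ((q a : ℂ))⁻¹ * ((q b : ℂ))⁻¹ := by
    intro a b
    rw [hB]
    push_cast
    ring
  have hBsymm : ∀ a b : P, B a b = B b a := by
    intro a b
    rw [hB, hB, add_comm a b, mul_right_comm]
  -- key Gauss sum orthogonality : (∑ q a) * (∑ (q a)⁻¹) = card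
  have hST : (∑ a : P, (q a : ℂ)) * (∑ c : P, ((q c : ℂ))⁻¹)
      = (Fintype.card P : ℂ) := by
    rw [Finset.sum_mul_sum, Finset.sum_comm]
    have step1 : ∀ c : P, ∑ a : P, (q a : ℂ) * ((q c : ℂ))⁻¹
        = ∑ d : P, (q d : ℂ) * (B c d : ℂ) := by
      intro c
      refine (Fintype.sum_equiv (Equiv.addLeft c)
        (fun d => (q d : ℂ) * (B c d : ℂ))
        (fun a => (q a : ℂ) * ((q c : ℂ))⁻¹) (fun d => ?_)).symm
      show (q d : ℂ) * (B c d : ℂ) = (q (c + d) : ℂ) * ((q c : ℂ))⁻¹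
      rw [hBc]
      field_simp
    calc ∑ c : P, ∑ a : P, (q a : ℂ) * ((q c : ℂ))⁻¹
        = ∑ c : P, ∑ d : P, (q d : ℂ) * (B c d : ℂ) :=
          Finset.sum_congr rfl (fun c _ => step1 c)
      _ = ∑ d : P, (q d : ℂ) * ∑ c : P, (B c d : ℂ) := by
          rw [Finset.sum_comm]
          exact Finset.sum_congr rfl (fun d _ => by rw [Finset.mul_sum])
      _ = (Fintype.card P : ℂ) := by
          have hinner : ∀ d : P, (∑ c : P, (B c d : ℂ))
              = if d = 0 then (Fintype.card P : ℂ) else 0 := by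
            intro d
            by_cases hd : d = 0
            · subst hd
              have hB0 : ∀ c : P, B c 0 = 1 := by
                intro c
                have := hmul₂ c 0 0
                rw [add_zero] at this
                exact (left_eq_mul.mp this)
              simp [hB0]
            · obtain ⟨b', hb'⟩ := hnd d hd
              rw [if_neg hd]
              exact char_sum_zero (fun c => B c d)
                (fun a b => hmul₁ a b d) b' (by simpa [hBsymm d b'] using hb')
          rw [Finset.sum_congr rfl
            (fun d _ => by rw [hinner d, mul_ite, mul_zero])]
          rw [Finset.sum_ite_eq' Finset.univ (0 : P)
            (fun d => (q d : ℂ) * (Fintype.card P : ℂ))]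
          simp [hq0]
  -- rewrite the second factor
  intro b
  have hterm : ∀ a : P, (((q a)⁻¹ * (B a b)⁻¹ : ℂˣ) : ℂ)
      = (q b : ℂ) * ((q (a + b) : ℂ))⁻¹ := by
    intro a
    have h1 : (((q a)⁻¹ * (B a b)⁻¹ : ℂˣ) : ℂ) = ((q a : ℂ))⁻¹ * ((B a b : ℂ))⁻¹ := by
      push_cast; ring
    rw [h1, hBc]
    field_simp
  have hfac : ∑ a : P, (((q a)⁻¹ * (B a b)⁻¹ : ℂˣ) : ℂ)
      = (q b : ℂ) * ∑ a : P, ((q (a + b) : ℂ))⁻¹ := by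
    rw [Finset.mul_sum]
    exact Finset.sum_congr rfl (fun a _ => hterm a)
  have hre : ∑ a : P, ((q (a + b) : ℂ))⁻¹ = ∑ c : P, ((q c : ℂ))⁻¹ :=
    Fintype.sum_equiv (Equiv.addRight b) _ _ (fun a => rfl)
  rw [hfac, hre]
  rw [show (∑ a : P, (q a : ℂ)) * ((q b : ℂ) * ∑ c : P, ((q c : ℂ))⁻¹)
      = ((∑ a : P, (q a : ℂ)) * ∑ c : P, ((q c : ℂ))⁻¹) * (q b : ℂ) by ring, hST]
end

section
/- The operation * makes L a group: * is associative, 0 is a two-sided identity, and −x is a two-sided inverse of x for every x ∈ L. -/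
/-- The class-2 Campbell–Hausdorff multiplication `x * y = x + y + (1/2)⁅x,y⁆`. -/
def czMul (R : Type*) [CommRing R] [Invertible (2 : R)] {L : Type*} [LieRing L]
    [LieAlgebra R L] (x y : L) : L :=
  x + y + (⅟2 : R) • ⁅x, y⁆

/-- for a Lie algebra of nilpotency class ≤ 2 over a ring where 2 is
invertible, the operation `x * y = x + y + (1/2)⁅x,y⁆` makes `L` a group:
it is associative, `0` is a two-sided identity, and `-x` is a two-sided inverse. -/
theorem czMul_group_structure
    (R : Type*) [CommRing R] [Invertible (2 : R)] {L : Type*} [LieRing L]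
    [LieAlgebra R L] (hnil : ∀ x y z : L, ⁅⁅x, y⁆, z⁆ = 0) :
    (∀ x y z : L, czMul R (czMul R x y) z = czMul R x (czMul R y z)) ∧
    (∀ x : L, czMul R 0 x = x ∧ czMul R x 0 = x) ∧
    (∀ x : L, czMul R (-x) x = 0 ∧ czMul R x (-x) = 0) := by
  have hnil' : ∀ x y z : L, ⁅x, ⁅y, z⁆⁆ = 0 := by
    intro x y z
    rw [← lie_skew, hnil, neg_zero]
  refine ⟨fun x y z => ?_, fun x => ⟨?_, ?_⟩, fun x => ⟨?_, ?_⟩⟩ <;>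
    simp only [czMul, add_lie, lie_add, lie_self, lie_zero, zero_lie, neg_lie, lie_neg, smul_lie, lie_smul,
      hnil, hnil', smul_zero, smul_add, smul_neg, add_zero, zero_add, neg_neg] <;>
    abel
end

section
/- For all x, y, z ∈ L one has ⁅x,y⁆ * z = z * ⁅x,y⁆; in particular every group commutator of (L, *) is central, so the group (L, *) is nilpotent of class at most 2. (This is the class-2 instance of the claim that Exp(𝔭) lies in the category of nilpotent groups with the same nilpotence class as 𝔭.) -/
/-- every Lie bracket `⁅x,y⁆` is central for the class-2
Campbell–Hausdorff multiplication: `⁅x,y⁆ * z = z * ⁅x,y⁆` for all `x y z`. -/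
theorem czMul_bracket_central
    (R : Type*) [CommRing R] [Invertible (2 : R)] {L : Type*} [LieRing L]
    [LieAlgebra R L] (hnil : ∀ x y z : L, ⁅⁅x, y⁆, z⁆ = 0) :
    ∀ x y z : L, czMul R ⁅x, y⁆ z = czMul R z ⁅x, y⁆ := by
  intro x y z
  simp [czMul, hnil, lie_skew, ← lie_skew z ⁅x,y⁆, hnil]
  abel
end

section
/- Let A and B be Lie subrings of L such that A, as a subspace of L, is connected. Then the additive subgroup of L generated by all brackets ⁅a,b⁆ with a ∈ A and b ∈ B is a connected subspace of L. (This is the topological content of Lemma 'commutator' of the paper: if 𝔞, 𝔟 are Lie subrings of 𝔤 with 𝔞 connected, then [𝔞,𝔟] is connected.) -/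
open Pointwise

/-- let `L` be a topological Lie ring (addition, negation and the Lie
bracket are continuous) and let `A`, `B` be Lie subrings of `L` (additive subgroups
closed under the bracket) with `A` connected as a subspace. Then the additive subgroup
generated by all brackets `⁅a,b⁆` with `a ∈ A`, `b ∈ B` is connected as a subspace. -/
theorem commutator_subring_connected
    {L : Type*} [LieRing L] [TopologicalSpace L]
    (hadd : Continuous fun p : L × L => p.1 + p.2)
    (hneg : Continuous fun x : L => -x)
    (hbr : Continuous fun p : L × L => ⁅p.1, p.2⁆)
    (A B : AddSubgroup L)
    (hA : ∀ x ∈ A, ∀ y ∈ A, ⁅x, y⁆ ∈ A)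
    (hB : ∀ x ∈ B, ∀ y ∈ B, ⁅x, y⁆ ∈ B)
    (hAconn : IsConnected (A : Set L)) :
    IsConnected
      ((AddSubgroup.closure {z : L | ∃ a ∈ A, ∃ b ∈ B, z = ⁅a, b⁆} : AddSubgroup L) :
        Set L) := by
  set S : Set L := {z : L | ∃ a ∈ A, ∃ b ∈ B, z = ⁅a, b⁆} with hSdef
  have hS0 : (0 : L) ∈ S := ⟨0, A.zero_mem, 0, B.zero_mem, (zero_lie 0).symm⟩
  have hSneg : ∀ z ∈ S, -z ∈ S := by
    rintro z ⟨a, ha, b, hb, rfl⟩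
    exact ⟨-a, A.neg_mem ha, b, hb, (neg_lie a b).symm⟩
  -- S is connected: union over b ∈ B of continuous images of A, all containing 0
  have hSconn : IsConnected S := by
    have hrw : S = ⋃₀ ((fun b => (fun a => ⁅a, b⁆) '' (A : Set L)) '' (B : Set L)) := by
      ext z
      simp only [hSdef, Set.sUnion_image, Set.mem_iUnion, Set.mem_image,
        Set.mem_setOf_eq, SetLike.mem_coe]
      constructor
      · rintro ⟨a, ha, b, hb, rfl⟩; exact ⟨b, hb, a, ha, rfl⟩
      · rintro ⟨b, hb, a, ha, rfl⟩; exact ⟨a, ha, b, hb, rfl⟩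
    constructor
    · exact ⟨0, hS0⟩
    rw [hrw]
    apply isPreconnected_sUnion (0 : L)
    · rintro t ⟨b, hb, rfl⟩
      exact ⟨0, A.zero_mem, zero_lie b⟩
    · rintro t ⟨b, hb, rfl⟩
      have hc : Continuous fun a : L => ⁅a, b⁆ :=
        hbr.comp (continuous_id.prodMk continuous_const)
      exact (hAconn.image _ hc.continuousOn).isPreconnected
  -- iterated sumsets
  let f : ℕ → Set L := fun n => Nat.rec ({0} : Set L) (fun _ ih => ih + S) n
  have hf0 : ∀ n, (0 : L) ∈ f n := by
    intro n
    induction n with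
    | zero => exact rfl
    | succ n ih => exact ⟨0, ih, 0, hS0, add_zero 0⟩
  have hfconn : ∀ n, IsConnected (f n) := by
    intro n
    induction n with
    | zero => exact isConnected_singleton
    | succ n ih =>
      have : f (n + 1) = (fun p : L × L => p.1 + p.2) '' (f n ×ˢ S) := by
        ext z
        simp only [Set.mem_image, Set.mem_prod, Prod.exists]
        constructor
        · rintro ⟨x, hx, y, hy, rfl⟩; exact ⟨x, y, ⟨hx, hy⟩, rfl⟩
        · rintro ⟨x, y, ⟨hx, hy⟩, rfl⟩; exact ⟨x, hx, y, hy, rfl⟩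
      rw [this]
      exact (ih.prod hSconn).image _ hadd.continuousOn
  have hadd' : ∀ n m x, x ∈ f m → ∀ y ∈ f n, x + y ∈ f (m + n) := by
    intro n
    induction n with
    | zero =>
      intro m x hx y hy
      have : y = 0 := hy
      simpa [this] using hx
    | succ n ih =>
      intro m x hx y hy
      obtain ⟨y', hy', s, hs, rfl⟩ := hy
      exact ⟨x + y', ih m x hx y' hy', s, hs, add_assoc x y' s⟩
  have hneg' : ∀ n x, x ∈ f n → -x ∈ f n := by
    intro n
    induction n with
    | zero =>
      intro x hx
      have : x = 0 := hx
      simp [this]; exact rfl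
    | succ n ih =>
      intro x hx
      obtain ⟨y, hy, s, hs, rfl⟩ := hx
      exact ⟨-y, ih y hy, -s, hSneg s hs, (neg_add y s).symm⟩
  -- the union is a subgroup
  let U : AddSubgroup L :=
    { carrier := ⋃ n, f n
      zero_mem' := Set.mem_iUnion.2 ⟨0, hf0 0⟩
      add_mem' := by
        rintro x y hx hy
        obtain ⟨m, hm⟩ := Set.mem_iUnion.1 hx
        obtain ⟨n, hn⟩ := Set.mem_iUnion.1 hy
        exact Set.mem_iUnion.2 ⟨m + n, hadd' n m x hm y hn⟩
      neg_mem' := by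
        rintro x hx
        obtain ⟨n, hn⟩ := Set.mem_iUnion.1 hx
        exact Set.mem_iUnion.2 ⟨n, hneg' n x hn⟩ }
  have hUS : S ⊆ (U : Set L) := by
    intro s hs
    exact Set.mem_iUnion.2 ⟨1, ⟨0, rfl, s, hs, zero_add s⟩⟩
  have hclosure : ((AddSubgroup.closure S : AddSubgroup L) : Set L) = ⋃ n, f n := by
    apply Set.Subset.antisymm
    · exact (AddSubgroup.closure_le U).2 hUS
    · have hsub : ∀ n, f n ⊆ ((AddSubgroup.closure S : AddSubgroup L) : Set L) := by
        intro n
        induction n with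
        | zero =>
          intro x hx
          have : x = 0 := hx
          rw [this]
          exact (AddSubgroup.closure S).zero_mem
        | succ n ih =>
          rintro x ⟨y, hy, s, hs, rfl⟩
          exact (AddSubgroup.closure S).add_mem (ih hy) (AddSubgroup.subset_closure hs)
      intro x hx
      obtain ⟨n, hn⟩ := Set.mem_iUnion.1 hx
      exact hsub n hn
  rw [hclosure]
  constructor
  · exact ⟨0, Set.mem_iUnion.2 ⟨0, hf0 0⟩⟩
  · rw [← Set.sUnion_range]
    apply isPreconnected_sUnion (0 : L)
    · rintro t ⟨n, rfl⟩; exact hf0 n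
    · rintro t ⟨n, rfl⟩; exact (hfconn n).isPreconnected
end
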